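/- Let k be an algebraically closed field of characteristic 2 and let C = {[x₀ : x₁ : x₂] ∈ ℙ²(k) : x₀x₁ + x₂² = 0}. For every point q ∈ ℙ²(k) with q ≠ [0:0:1], there is exactly one projective line L in ℙ²(k) such that q ∈ L and L ∩ C consists of exactly one point (namely, the line through q and [0:0:1]). -/

import Mathlib

namespace ConicAux
variable {k : Type*} [Field k]

/-- Explicit linear functional on `Fin 3 → k` with coefficients `a b c`. -/
def lfun (a b c : k) : (Fin 3 → k) →ₗ[k] k where
  toFun v := a * v 0 + b * v 1 + c * v 2
  map_add' v w := by simp only [Pi.add_apply]; ring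
  map_smul' r v := by simp only [Pi.smul_apply, smul_eq_mul, RingHom.id_apply]; ring

lemma lfun_apply (a b c : k) (v : Fin 3 → k) :
    lfun a b c v = a * v 0 + b * v 1 + c * v 2 := rfl

lemma lin_decomp (φ : (Fin 3 → k) →ₗ[k] k) (v : Fin 3 → k) :
    φ v = v 0 * φ ![1,0,0] + v 1 * φ ![0,1,0] + v 2 * φ ![0,0,1] := by
  have hv : v = v 0 • ![(1:k),0,0] + v 1 • ![0,1,0] + v 2 • ![0,0,1] := by
    funext i; fin_cases i <;> simp
  conv_lhs => rw [hv]
  rw [map_add, map_add, map_smul, map_smul, map_smul]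
  simp [smul_eq_mul]

lemma lin_rep_eq_zero_iff (φ : (Fin 3 → k) →ₗ[k] k) (v : Fin 3 → k) (hv : v ≠ 0) :
    φ ((Projectivization.mk k v hv).rep) = 0 ↔ φ v = 0 := by
  obtain ⟨a, ha⟩ := Projectivization.exists_smul_eq_mk_rep k v hv
  rw [← ha, Units.smul_def, map_smul, smul_eq_mul, mul_eq_zero]
  simp [a.ne_zero]

lemma conic_rep_iff (v : Fin 3 → k) (hv : v ≠ 0) :
    ((Projectivization.mk k v hv).rep 0 * (Projectivization.mk k v hv).rep 1 +
      (Projectivization.mk k v hv).rep 2 ^ 2 = 0) ↔ (v 0 * v 1 + v 2 ^ 2 = 0) := by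
  obtain ⟨a, ha⟩ := Projectivization.exists_smul_eq_mk_rep k v hv
  rw [← ha]
  have h : ∀ i : Fin 3, (a • v) i = (a : k) * v i := fun i => rfl
  rw [h 0, h 1, h 2]
  have he : (a:k) * v 0 * ((a:k) * v 1) + ((a:k) * v 2)^2 = (a:k)^2 * (v 0 * v 1 + v 2 ^2) := by
    ring
  rw [he, mul_eq_zero]
  simp [pow_eq_zero_iff, a.ne_zero]

lemma sq_inj [CharP k 2] {x y : k} (h : x ^ 2 = y ^ 2) : x = y := by
  have h2 : (2:k) = 0 := CharTwo.two_eq_zero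
  have h3 : (x + y) ^ 2 = 0 := by linear_combination h + (x * y + y ^ 2) * h2
  have h4 := pow_eq_zero_iff (n := 2) (by norm_num) |>.mp h3
  linear_combination h4 - y * h2

end ConicAux

open ConicAux in
/-- **Unique tangent line through a point in characteristic 2.**
For the conic `C : x₀x₁ + x₂² = 0` over an algebraically closed field of characteristic `2`
and any point `q ≠ [0:0:1]` of `ℙ²(k)`, there is exactly one projective line `L` through `q`
meeting `C` in exactly one point (namely, the line through `q` and `[0:0:1]`). -/
theorem conic_char_two_unique_tangent_through_point {k : Type*} [Field k] [IsAlgClosed k]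
    [CharP k 2]
    (C : Set (Projectivization k (Fin 3 → k)))
    (hC : C = {P | P.rep 0 * P.rep 1 + P.rep 2 ^ 2 = 0})
    (q : Projectivization k (Fin 3 → k))
    (hq : q ≠ Projectivization.mk k ![0, 0, 1] (by intro h; exact one_ne_zero (congrFun h 2))) :
    ∃! L : Set (Projectivization k (Fin 3 → k)),
      (∃ φ : (Fin 3 → k) →ₗ[k] k, φ ≠ 0 ∧ L = {P | φ P.rep = 0}) ∧
      q ∈ L ∧ (L ∩ C).ncard = 1 := by
  classical
  have h2 : (2:k) = 0 := CharTwo.two_eq_zero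
  set c₀ := q.rep 0 with hc₀def
  set c₁ := q.rep 1 with hc₁def
  -- not both of the first two coordinates of q vanish
  have hc : ¬ (c₀ = 0 ∧ c₁ = 0) := by
    rintro ⟨h0, h1⟩
    apply hq
    rw [← q.mk_rep, Projectivization.mk_eq_mk_iff']
    refine ⟨q.rep 2, ?_⟩
    funext i
    fin_cases i <;> simp [← hc₀def, ← hc₁def, h0, h1]
  obtain ⟨s, hs⟩ := IsAlgClosed.exists_pow_nat_eq (c₀ * c₁) (n := 2) (by norm_num)
  have hvpt : (![c₀, c₁, s] : Fin 3 → k) ≠ 0 := by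
    intro h
    exact hc ⟨by simpa using congrFun h 0, by simpa using congrFun h 1⟩
  set pt := Projectivization.mk k ![c₀, c₁, s] hvpt with hptdef
  have hφ₀ne : lfun c₁ c₀ 0 ≠ 0 := by
    intro h
    apply hc
    constructor
    · have := LinearMap.congr_fun h ![0,1,0]
      simpa [lfun_apply] using this
    · have := LinearMap.congr_fun h ![1,0,0]
      simpa [lfun_apply] using this
  refine ⟨{P | lfun c₁ c₀ 0 P.rep = 0}, ⟨⟨lfun c₁ c₀ 0, hφ₀ne, rfl⟩, ?_, ?_⟩, ?_⟩
  · -- q is on the line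
    show lfun c₁ c₀ 0 q.rep = 0
    rw [lfun_apply]
    linear_combination (c₀ * c₁) * h2
  · -- the line meets C in exactly one point
    have hset : {P | lfun c₁ c₀ 0 P.rep = 0} ∩ C = {pt} := by
      ext P
      simp only [Set.mem_inter_iff, Set.mem_setOf_eq, hC, Set.mem_singleton_iff]
      constructor
      · rintro ⟨hL, hQ⟩
        rw [lfun_apply] at hL
        rw [← P.mk_rep, hptdef, Projectivization.mk_eq_mk_iff']
        rcases eq_or_ne c₀ 0 with h0 | h0
        · have h1 : c₁ ≠ 0 := fun h => hc ⟨h0, h⟩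
          have hx0 : P.rep 0 = 0 := by
            have hm : c₁ * P.rep 0 = 0 := by linear_combination hL - P.rep 1 * h0
            exact (mul_eq_zero.mp hm).resolve_left h1
          have hx2 : P.rep 2 = 0 := by
            have hm : P.rep 2 ^ 2 = 0 := by linear_combination hQ - P.rep 1 * hx0
            exact pow_eq_zero_iff (two_ne_zero) |>.mp hm
          have hs0 : s = 0 := by
            apply pow_eq_zero_iff (n := 2) (two_ne_zero) |>.mp
            rw [hs, h0, zero_mul]
          refine ⟨P.rep 1 / c₁, ?_⟩
          funext i
          fin_cases i <;>
            simp [h0, hx0, hx2, hs0, div_mul_cancel₀, h1]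
        · refine ⟨P.rep 0 / c₀, ?_⟩
          have e1 : P.rep 0 / c₀ * c₁ = P.rep 1 := by
            field_simp
            linear_combination hL - c₀ * P.rep 1 * h2
          have e2 : P.rep 0 / c₀ * s = P.rep 2 := by
            apply sq_inj
            field_simp
            linear_combination P.rep 0 ^ 2 * hs - c₀ ^ 2 * hQ +
              c₀ * P.rep 0 * hL
          funext i
          fin_cases i <;>
            simp [div_mul_cancel₀, h0, e1, e2]
      · rintro rfl
        constructor
        · rw [hptdef, lin_rep_eq_zero_iff, lfun_apply]
          simp only [Matrix.cons_val_zero, Matrix.cons_val_one, Matrix.head_cons, Matrix.cons_val_two, Matrix.tail_cons, Matrix.head_fin_const]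
          linear_combination (c₀ * c₁) * h2
        · rw [hptdef, conic_rep_iff]
          simp only [Matrix.cons_val_zero, Matrix.cons_val_one, Matrix.head_cons,
            Matrix.cons_val_two, Matrix.tail_cons, Matrix.head_fin_const]
          linear_combination hs + (c₀ * c₁) * h2
    rw [hset, Set.ncard_singleton]
  · -- uniqueness
    rintro L ⟨⟨φ, hφ, rfl⟩, hqL, hcard⟩
    set a := φ ![1,0,0] with hadef
    set b := φ ![0,1,0] with hbdef
    set c := φ ![0,0,1] with hcdef
    have hq' : c₀ * a + c₁ * b + q.rep 2 * c = 0 := by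
      have := hqL
      simp only [Set.mem_setOf_eq] at this
      rw [lin_decomp] at this
      exact this
    obtain ⟨x, hx⟩ := Set.ncard_eq_one.mp hcard
    -- Step A : c = 0
    have hc0 : c = 0 := by
      by_contra hcne
      -- we exhibit two distinct points on L ∩ C
      suffices hsuff : ∃ P₁ P₂ : Projectivization k (Fin 3 → k), P₁ ≠ P₂ ∧
          P₁ ∈ {P | φ P.rep = 0} ∩ C ∧ P₂ ∈ {P | φ P.rep = 0} ∩ C by
        obtain ⟨P₁, P₂, hne, h1, h2'⟩ := hsuff
        rw [hx] at h1 h2'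
        exact hne (h1.trans h2'.symm)
      rcases eq_or_ne a 0 with ha0 | ha0
      · -- two explicit points
        have hv₁ : (![(1:k),0,0] : Fin 3 → k) ≠ 0 :=
          fun h => one_ne_zero (congrFun h 0)
        have hv₂ : (![b^2, c^2, b*c] : Fin 3 → k) ≠ 0 := by
          intro h
          exact pow_ne_zero 2 hcne (by simpa using congrFun h 1)
        refine ⟨Projectivization.mk k _ hv₁, Projectivization.mk k _ hv₂, ?_, ⟨?_, ?_⟩, ⟨?_, ?_⟩⟩
        · rw [Ne, Projectivization.mk_eq_mk_iff']
          rintro ⟨α, hα⟩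
          have e1 : α * c^2 = 0 := by simpa using congrFun hα 1
          have e0 : α * b^2 = 1 := by simpa using congrFun hα 0
          have : α = 0 := by
            rcases mul_eq_zero.mp e1 with h | h
            · exact h
            · exact absurd h (pow_ne_zero 2 hcne)
          rw [this, zero_mul] at e0
          exact zero_ne_one e0
        · show φ _ = 0
          rw [lin_rep_eq_zero_iff, lin_decomp]
          simp only [Matrix.cons_val_zero, Matrix.cons_val_one, Matrix.head_cons,
            Matrix.cons_val_two, Matrix.tail_cons, Matrix.head_fin_const]
          simp only [← hadef, ← hbdef, ← hcdef]
          linear_combination ha0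
        · rw [hC]
          show _ * _ + _ ^ 2 = 0
          rw [conic_rep_iff]
          simp
        · show φ _ = 0
          rw [lin_rep_eq_zero_iff, lin_decomp]
          simp only [Matrix.cons_val_zero, Matrix.cons_val_one, Matrix.head_cons,
            Matrix.cons_val_two, Matrix.tail_cons, Matrix.head_fin_const]
          simp only [← hadef, ← hbdef, ← hcdef]
          linear_combination b^2 * ha0 + b * c^2 * h2
        · rw [hC]
          show _ * _ + _ ^ 2 = 0
          rw [conic_rep_iff]
          have h22 : (![b^2, c^2, b*c] : Fin 3 → k) 2 = b * c := by simp
          simp only [Matrix.cons_val_zero, Matrix.cons_val_one, Matrix.head_cons, Matrix.cons_val_two, Matrix.tail_cons, h22]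
          linear_combination b^2 * c^2 * h2
      · -- a ≠ 0 : Artin-Schreier roots give two points
        obtain ⟨u, hu⟩ := IsAlgClosed.exists_root
          (Polynomial.X ^ 2 + Polynomial.X + Polynomial.C (a^2 * b^2 / c^4))
          (by
            have hdeg : (Polynomial.X ^ 2 + Polynomial.X +
                Polynomial.C (a^2 * b^2 / c^4) : Polynomial k).degree = 2 := by
              compute_degree!
            rw [hdeg]; norm_num)
        have hu' : u ^ 2 + u + a^2 * b^2 / c^4 = 0 := by
          have := hu
          simp [Polynomial.IsRoot, Polynomial.eval_add, Polynomial.eval_pow] at this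
          linear_combination this
        have huc : u ^ 2 * c^4 + u * c^4 + a^2 * b^2 = 0 := by
          field_simp at hu'
          linear_combination hu'
        -- the two tangent parameter values
        set t₁ := c^2 / a^2 * u with ht₁def
        set t₂ := c^2 / a^2 * (u + 1) with ht₂def
        have hroot : ∀ t : k, a^2 * t^2 + c^2 * t + b^2 = 0 →
            (![t, 1, (a*t+b)/c] : Fin 3 → k) ≠ 0 ∧
            φ ![t, 1, (a*t+b)/c] = 0 ∧
            (t * 1 + ((a*t+b)/c)^2 = 0) := by
          intro t ht
          refine ⟨fun h => ?_, ?_, ?_⟩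
          · have := congrFun h 1
            simp at this
          · rw [lin_decomp]
            simp only [Matrix.cons_val_zero, Matrix.cons_val_one, Matrix.head_cons,
              Matrix.cons_val_two, Matrix.tail_cons, Matrix.head_fin_const]
            simp only [← hadef, ← hbdef, ← hcdef]
            rw [div_mul_cancel₀ _ hcne]
            linear_combination (a * t + b) * h2
          · field_simp
            linear_combination ht + a * b * t * h2
        have hr₁ : a^2 * t₁^2 + c^2 * t₁ + b^2 = 0 := by
          rw [ht₁def]
          field_simp
          linear_combination huc
        have hr₂ : a^2 * t₂^2 + c^2 * t₂ + b^2 = 0 := by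
          rw [ht₂def]
          field_simp
          linear_combination huc + (c ^ 4 * u + c ^ 4) * h2
        obtain ⟨hn₁, hl₁, hq₁⟩ := hroot t₁ hr₁
        obtain ⟨hn₂, hl₂, hq₂⟩ := hroot t₂ hr₂
        have ht12 : t₁ ≠ t₂ := by
          intro h
          rw [ht₁def, ht₂def] at h
          have hca : c^2 / a^2 ≠ 0 := div_ne_zero (pow_ne_zero 2 hcne) (pow_ne_zero 2 ha0)
          have := mul_left_cancel₀ hca h
          simpa using this
        refine ⟨Projectivization.mk k _ hn₁, Projectivization.mk k _ hn₂, ?_, ⟨?_, ?_⟩, ⟨?_, ?_⟩⟩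
        · rw [Ne, Projectivization.mk_eq_mk_iff']
          rintro ⟨α, hα⟩
          have e1 : α * 1 = 1 := by simpa using congrFun hα 1
          have e0 : α * t₂ = t₁ := by simpa using congrFun hα 0
          rw [mul_one] at e1
          rw [e1, one_mul] at e0
          exact ht12 e0.symm
        · show φ _ = 0
          rw [lin_rep_eq_zero_iff]
          exact hl₁
        · rw [hC]
          show _ * _ + _ ^ 2 = 0
          rw [conic_rep_iff]
          have h22 : (![t₁, 1, (a*t₁+b)/c] : Fin 3 → k) 2 = (a*t₁+b)/c := by simp
          simp only [Matrix.cons_val_zero, Matrix.cons_val_one, Matrix.head_cons, Matrix.cons_val_two, Matrix.tail_cons, h22]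
          exact hq₁
        · show φ _ = 0
          rw [lin_rep_eq_zero_iff]
          exact hl₂
        · rw [hC]
          show _ * _ + _ ^ 2 = 0
          rw [conic_rep_iff]
          have h22 : (![t₂, 1, (a*t₂+b)/c] : Fin 3 → k) 2 = (a*t₂+b)/c := by simp
          simp only [Matrix.cons_val_zero, Matrix.cons_val_one, Matrix.head_cons, Matrix.cons_val_two, Matrix.tail_cons, h22]
          exact hq₂
    -- Step B : identify the line
    have hab : ¬ (a = 0 ∧ b = 0) := by
      rintro ⟨ha0, hb0⟩
      apply hφ
      apply LinearMap.ext
      intro v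
      rw [lin_decomp]
      simp [← hadef, ← hbdef, ← hcdef, ha0, hb0, hc0]
    -- find μ ≠ 0 with a = μ c₁ and b = μ c₀
    obtain ⟨μ, hμ0, haμ, hbμ⟩ : ∃ μ : k, μ ≠ 0 ∧ a = μ * c₁ ∧ b = μ * c₀ := by
      rcases eq_or_ne c₀ 0 with h0 | h0
      · have h1 : c₁ ≠ 0 := fun h => hc ⟨h0, h⟩
        have hb0 : b = 0 := by
          have hm : c₁ * b = 0 := by
            linear_combination hq' - a * h0 - q.rep 2 * hc0
          exact (mul_eq_zero.mp hm).resolve_left h1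
        have ha0 : a ≠ 0 := fun h => hab ⟨h, hb0⟩
        exact ⟨a / c₁, div_ne_zero ha0 h1, by field_simp, by rw [h0, mul_zero, hb0]⟩
      · have hb0 : b ≠ 0 := by
          intro hb0
          apply hab
          refine ⟨?_, hb0⟩
          have hm : c₀ * a = 0 := by
            linear_combination hq' - c₁ * hb0 - q.rep 2 * hc0
          exact (mul_eq_zero.mp hm).resolve_left h0
        refine ⟨b / c₀, div_ne_zero hb0 h0, ?_, by field_simp⟩
        field_simp
        linear_combination hq' - q.rep 2 * hc0 - c₁ * b * h2
    ext P
    simp only [Set.mem_setOf_eq]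
    rw [lin_decomp φ, lfun_apply, ← hadef, ← hbdef, ← hcdef, haμ, hbμ, hc0]
    constructor
    · intro h
      have hm : μ * (c₁ * P.rep 0 + c₀ * P.rep 1 + 0 * P.rep 2) = 0 := by
        linear_combination h
      exact (mul_eq_zero.mp hm).resolve_left hμ0
    · intro h
      linear_combination μ * h
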